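/- arXiv:0708.3847 — 9 statements merged into one kernel-verified Lean document; each statement's English description precedes it below -/
import Mathlib

section
/- For every P = (p,q,r) ∈ ℤ³, the six tetrahedra T¹_P, …, T⁶_P have pairwise disjoint interiors, and their union equals the unit cube [p, p+1] × [q, q+1] × [r, r+1]. -/
def tetVerts (i : Fin 6) (p q r : ℤ) : Fin 4 → (Fin 3 → ℤ) :=
  match i with
  | 0 => ![![p, q, r], ![p + 1, q, r], ![p, q + 1, r], ![p, q, r + 1]]
  | 1 => ![![p + 1, q + 1, r], ![p + 1, q, r], ![p, q + 1, r], ![p, q, r + 1]]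
  | 2 => ![![p + 1, q, r], ![p + 1, q + 1, r], ![p, q, r + 1], ![p + 1, q, r + 1]]
  | 3 => ![![p, q + 1, r], ![p + 1, q + 1, r], ![p, q, r + 1], ![p, q + 1, r + 1]]
  | 4 => ![![p + 1, q + 1, r], ![p + 1, q, r + 1], ![p, q + 1, r + 1], ![p, q, r + 1]]
  | 5 => ![![p + 1, q + 1, r], ![p + 1, q, r + 1], ![p, q + 1, r + 1], ![p + 1, q + 1, r + 1]]

noncomputable def tet (i : Fin 6) (p q r : ℤ) : Set (Fin 3 → ℝ) :=
  convexHull ℝ (Set.range fun a : Fin 4 => fun k : Fin 3 => ((tetVerts i p q r a k : ℤ) : ℝ))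

/-- linear functional a*x0 + b*x1 + c*x2 -/
def lf (a b c : ℝ) : (Fin 3 → ℝ) →ₗ[ℝ] ℝ where
  toFun x := a * x 0 + b * x 1 + c * x 2
  map_add' x y := by simp [Pi.add_apply]; ring
  map_smul' m x := by simp [Pi.smul_apply]; ring

noncomputable def clf (a b c : ℝ) : (Fin 3 → ℝ) →L[ℝ] ℝ :=
  LinearMap.toContinuousLinearMap (lf a b c)

@[simp] lemma clf_apply (a b c : ℝ) (x : Fin 3 → ℝ) :
    clf a b c x = a * x 0 + b * x 1 + c * x 2 := by
  simp [clf, lf]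

lemma mem_hull4 {g : Fin 4 → (Fin 3 → ℝ)} (w : Fin 4 → ℝ)
    (hw : ∀ i, 0 ≤ w i) (hs : ∑ i, w i = 1) {x : Fin 3 → ℝ}
    (hx : x = ∑ i, w i • g i) : x ∈ convexHull ℝ (Set.range g) := by
  rw [hx]
  exact (convex_convexHull ℝ _).sum_mem (fun i _ => hw i) hs
    (fun i _ => subset_convexHull ℝ _ ⟨i, rfl⟩)

lemma tet_sep {i j : Fin 6} (p q r : ℤ) (a b c d : ℝ)
    (hsurj : Function.Surjective (clf a b c))
    (hi : ∀ v : Fin 4, a * (tetVerts i p q r v 0 : ℝ) + b * (tetVerts i p q r v 1 : ℝ)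
        + c * (tetVerts i p q r v 2 : ℝ) ≤ d)
    (hj : ∀ v : Fin 4, d ≤ a * (tetVerts j p q r v 0 : ℝ) + b * (tetVerts j p q r v 1 : ℝ)
        + c * (tetVerts j p q r v 2 : ℝ)) :
    Disjoint (interior (tet i p q r)) (interior (tet j p q r)) := by
  have hop : IsOpenMap (clf a b c) := (clf a b c).isOpenMap hsurj
  have hcont : Continuous (clf a b c) := (clf a b c).continuous
  have hAi : tet i p q r ⊆ (clf a b c) ⁻¹' Set.Iic d := by
    apply convexHull_min _ ((convex_Iic d).linear_preimage (clf a b c : (Fin 3 → ℝ) →ₗ[ℝ] ℝ))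
    rintro _ ⟨v, rfl⟩
    simpa using hi v
  have hAj : tet j p q r ⊆ (clf a b c) ⁻¹' Set.Ici d := by
    apply convexHull_min _ ((convex_Ici d).linear_preimage (clf a b c : (Fin 3 → ℝ) →ₗ[ℝ] ℝ))
    rintro _ ⟨v, rfl⟩
    simpa using hj v
  have h1 : interior (tet i p q r) ⊆ (clf a b c) ⁻¹' Set.Iio d := by
    calc interior (tet i p q r) ⊆ interior ((clf a b c) ⁻¹' Set.Iic d) := interior_mono hAi
      _ = (clf a b c) ⁻¹' interior (Set.Iic d) :=
        (hop.preimage_interior_eq_interior_preimage hcont _).symm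
      _ = (clf a b c) ⁻¹' Set.Iio d := by rw [interior_Iic]
  have h2 : interior (tet j p q r) ⊆ (clf a b c) ⁻¹' Set.Ioi d := by
    calc interior (tet j p q r) ⊆ interior ((clf a b c) ⁻¹' Set.Ici d) := interior_mono hAj
      _ = (clf a b c) ⁻¹' interior (Set.Ici d) :=
        (hop.preimage_interior_eq_interior_preimage hcont _).symm
      _ = (clf a b c) ⁻¹' Set.Ioi d := by rw [interior_Ici]
  refine Set.disjoint_left.mpr fun x hx1 hx2 => ?_
  have := h1 hx1
  have := h2 hx2
  simp only [Set.mem_preimage, Set.mem_Iio, Set.mem_Ioi] at *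
  linarith

lemma surjA (b c : ℝ) : Function.Surjective (clf 1 b c) :=
  fun y => ⟨![y, 0, 0], by simp⟩

lemma surjB (a c : ℝ) : Function.Surjective (clf a 1 c) :=
  fun y => ⟨![0, y, 0], by simp⟩

set_option maxHeartbeats 1000000 in
lemma tet_disj_lt (p q r : ℤ) : ∀ i j : Fin 6, i < j →
    Disjoint (interior (tet i p q r)) (interior (tet j p q r)) := by
  intro i j hij
  fin_cases i <;> fin_cases j <;> (try exact absurd hij (by decide)) <;>
        [ exact tet_sep p q r 1 1 1 ((p:ℝ)+q+r+1) (surjA 1 1)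
            (by intro v; fin_cases v <;> simp [tetVerts, Matrix.vecHead, Matrix.vecTail] <;> push_cast <;> linarith)
            (by intro v; fin_cases v <;> simp [tetVerts, Matrix.vecHead, Matrix.vecTail] <;> push_cast <;> linarith);
          exact tet_sep p q r 1 1 1 ((p:ℝ)+q+r+1) (surjA 1 1)
            (by intro v; fin_cases v <;> simp [tetVerts, Matrix.vecHead, Matrix.vecTail] <;> push_cast <;> linarith)
            (by intro v; fin_cases v <;> simp [tetVerts, Matrix.vecHead, Matrix.vecTail] <;> push_cast <;> linarith);
          exact tet_sep p q r 1 1 1 ((p:ℝ)+q+r+1) (surjA 1 1)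
            (by intro v; fin_cases v <;> simp [tetVerts, Matrix.vecHead, Matrix.vecTail] <;> push_cast <;> linarith)
            (by intro v; fin_cases v <;> simp [tetVerts, Matrix.vecHead, Matrix.vecTail] <;> push_cast <;> linarith);
          exact tet_sep p q r 1 1 1 ((p:ℝ)+q+r+1) (surjA 1 1)
            (by intro v; fin_cases v <;> simp [tetVerts, Matrix.vecHead, Matrix.vecTail] <;> push_cast <;> linarith)
            (by intro v; fin_cases v <;> simp [tetVerts, Matrix.vecHead, Matrix.vecTail] <;> push_cast <;> linarith);
          exact tet_sep p q r 1 1 1 ((p:ℝ)+q+r+1) (surjA 1 1)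
            (by intro v; fin_cases v <;> simp [tetVerts, Matrix.vecHead, Matrix.vecTail] <;> push_cast <;> linarith)
            (by intro v; fin_cases v <;> simp [tetVerts, Matrix.vecHead, Matrix.vecTail] <;> push_cast <;> linarith);
          exact tet_sep p q r 1 0 1 ((p:ℝ)+r+1) (surjA 0 1)
            (by intro v; fin_cases v <;> simp [tetVerts, Matrix.vecHead, Matrix.vecTail] <;> push_cast <;> linarith)
            (by intro v; fin_cases v <;> simp [tetVerts, Matrix.vecHead, Matrix.vecTail] <;> push_cast <;> linarith);
          exact tet_sep p q r 0 1 1 ((q:ℝ)+r+1) (surjB 0 1)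
            (by intro v; fin_cases v <;> simp [tetVerts, Matrix.vecHead, Matrix.vecTail] <;> push_cast <;> linarith)
            (by intro v; fin_cases v <;> simp [tetVerts, Matrix.vecHead, Matrix.vecTail] <;> push_cast <;> linarith);
          exact tet_sep p q r 1 0 1 ((p:ℝ)+r+1) (surjA 0 1)
            (by intro v; fin_cases v <;> simp [tetVerts, Matrix.vecHead, Matrix.vecTail] <;> push_cast <;> linarith)
            (by intro v; fin_cases v <;> simp [tetVerts, Matrix.vecHead, Matrix.vecTail] <;> push_cast <;> linarith);
          exact tet_sep p q r 1 1 1 ((p:ℝ)+q+r+2) (surjA 1 1)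
            (by intro v; fin_cases v <;> simp [tetVerts, Matrix.vecHead, Matrix.vecTail] <;> push_cast <;> linarith)
            (by intro v; fin_cases v <;> simp [tetVerts, Matrix.vecHead, Matrix.vecTail] <;> push_cast <;> linarith);
          exact tet_sep p q r (-1) 1 0 ((q:ℝ)-p) (surjB (-1) 0)
            (by intro v; fin_cases v <;> simp [tetVerts, Matrix.vecHead, Matrix.vecTail] <;> push_cast <;> linarith)
            (by intro v; fin_cases v <;> simp [tetVerts, Matrix.vecHead, Matrix.vecTail] <;> push_cast <;> linarith);
          exact tet_sep p q r 0 1 1 ((q:ℝ)+r+1) (surjB 0 1)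
            (by intro v; fin_cases v <;> simp [tetVerts, Matrix.vecHead, Matrix.vecTail] <;> push_cast <;> linarith)
            (by intro v; fin_cases v <;> simp [tetVerts, Matrix.vecHead, Matrix.vecTail] <;> push_cast <;> linarith);
          exact tet_sep p q r 0 1 1 ((q:ℝ)+r+1) (surjB 0 1)
            (by intro v; fin_cases v <;> simp [tetVerts, Matrix.vecHead, Matrix.vecTail] <;> push_cast <;> linarith)
            (by intro v; fin_cases v <;> simp [tetVerts, Matrix.vecHead, Matrix.vecTail] <;> push_cast <;> linarith);
          exact tet_sep p q r 1 0 1 ((p:ℝ)+r+1) (surjA 0 1)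
            (by intro v; fin_cases v <;> simp [tetVerts, Matrix.vecHead, Matrix.vecTail] <;> push_cast <;> linarith)
            (by intro v; fin_cases v <;> simp [tetVerts, Matrix.vecHead, Matrix.vecTail] <;> push_cast <;> linarith);
          exact tet_sep p q r 1 0 1 ((p:ℝ)+r+1) (surjA 0 1)
            (by intro v; fin_cases v <;> simp [tetVerts, Matrix.vecHead, Matrix.vecTail] <;> push_cast <;> linarith)
            (by intro v; fin_cases v <;> simp [tetVerts, Matrix.vecHead, Matrix.vecTail] <;> push_cast <;> linarith);
          exact tet_sep p q r 1 1 1 ((p:ℝ)+q+r+2) (surjA 1 1)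
            (by intro v; fin_cases v <;> simp [tetVerts, Matrix.vecHead, Matrix.vecTail] <;> push_cast <;> linarith)
            (by intro v; fin_cases v <;> simp [tetVerts, Matrix.vecHead, Matrix.vecTail] <;> push_cast <;> linarith)]

set_option maxHeartbeats 1000000 in
lemma tet_subset_Icc (p q r : ℤ) (i : Fin 6) : tet i p q r ⊆
    Set.Icc (fun k : Fin 3 => ((![p, q, r] k : ℤ) : ℝ))
      (fun k : Fin 3 => ((![p + 1, q + 1, r + 1] k : ℤ) : ℝ)) := by
  apply convexHull_min _ (convex_Icc _ _)
  rintro _ ⟨v, rfl⟩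
  rw [Set.mem_Icc]
  constructor <;>
    (intro k; fin_cases i <;> fin_cases v <;> fin_cases k <;>
      simp [tetVerts, Matrix.vecHead, Matrix.vecTail] <;> push_cast <;> linarith)

set_option maxHeartbeats 1000000 in
/-- The six tetrahedra `T¹_P, …, T⁶_P` have pairwise disjoint interiors, and their union is the
unit cube `[p,p+1] × [q,q+1] × [r,r+1]`. -/
theorem tets_subdivide_unit_cube (p q r : ℤ) :
    (∀ i j : Fin 6, i ≠ j →
      Disjoint (interior (tet i p q r)) (interior (tet j p q r))) ∧
    (⋃ i : Fin 6, tet i p q r) =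
      Set.Icc (fun k : Fin 3 => ((![p, q, r] k : ℤ) : ℝ))
        (fun k : Fin 3 => ((![p + 1, q + 1, r + 1] k : ℤ) : ℝ)) := by
  constructor
  · intro i j hij
    rcases lt_or_gt_of_ne hij with h | h
    · exact tet_disj_lt p q r i j h
    · exact (tet_disj_lt p q r j i h).symm
  · apply Set.Subset.antisymm
    · exact Set.iUnion_subset (tet_subset_Icc p q r)
    · intro x hx
      rw [Set.mem_Icc] at hx
      obtain ⟨h1, h2⟩ := hx
      have hp0 : (p:ℝ) ≤ x 0 := by simpa using h1 0
      have hq0 : (q:ℝ) ≤ x 1 := by simpa using h1 1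
      have hr0 : (r:ℝ) ≤ x 2 := by simpa using h1 2
      have hp1 : x 0 ≤ (p:ℝ) + 1 := by simpa using h2 0
      have hq1 : x 1 ≤ (q:ℝ) + 1 := by simpa using h2 1
      have hr1 : x 2 ≤ (r:ℝ) + 1 := by simpa using h2 2
      have mem : ∀ (i : Fin 6) (w : Fin 4 → ℝ), (∀ a, 0 ≤ w a) → (∑ a, w a) = 1 →
          (x = ∑ a, w a • (fun k => ((tetVerts i p q r a k : ℤ) : ℝ))) →
          x ∈ ⋃ i : Fin 6, tet i p q r :=
        fun i w hw hs hxe => Set.mem_iUnion.mpr ⟨i, mem_hull4 w hw hs hxe⟩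
      rcases le_total (x 0 + x 1 + x 2) ((p:ℝ)+q+r+1) with hs1 | hs1
      · refine mem 0 ![1 - ((x 0 - p) + (x 1 - q) + (x 2 - r)), x 0 - p, x 1 - q, x 2 - r]
          ?_ ?_ ?_
        · intro a; fin_cases a <;> simp <;> linarith
        · simp [Fin.sum_univ_four]; ring
        · funext k; fin_cases k <;>
            simp [Fin.sum_univ_four, tetVerts, Matrix.vecHead, Matrix.vecTail] <;> push_cast <;> ring
      rcases le_total ((p:ℝ)+q+r+2) (x 0 + x 1 + x 2) with hs2 | hs2
      · refine mem 5 ![1 - (x 2 - r), 1 - (x 1 - q), 1 - (x 0 - p),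
          (x 0 - p)+(x 1 - q)+(x 2 - r) - 2] ?_ ?_ ?_
        · intro a; fin_cases a <;> simp <;> linarith
        · simp [Fin.sum_univ_four]; ring
        · funext k; fin_cases k <;>
            simp [Fin.sum_univ_four, tetVerts, Matrix.vecHead, Matrix.vecTail] <;> push_cast <;> ring
      rcases le_total (x 0 + x 2) ((p:ℝ)+r+1) with ha | ha <;>
        rcases le_total (x 1 + x 2) ((q:ℝ)+r+1) with hb | hb
      · refine mem 1 ![(x 0 - p)+(x 1 - q)+(x 2 - r) - 1, 1 - (x 1 - q) - (x 2 - r),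
          1 - (x 0 - p) - (x 2 - r), x 2 - r] ?_ ?_ ?_
        · intro a; fin_cases a <;> simp <;> linarith
        · simp [Fin.sum_univ_four]; ring
        · funext k; fin_cases k <;>
            simp [Fin.sum_univ_four, tetVerts, Matrix.vecHead, Matrix.vecTail] <;> push_cast <;> ring
      · refine mem 3 ![1 - (x 0 - p) - (x 2 - r), x 0 - p, 1 - (x 1 - q),
          (x 1 - q) + (x 2 - r) - 1] ?_ ?_ ?_
        · intro a; fin_cases a <;> simp <;> linarith
        · simp [Fin.sum_univ_four]; ring
        · funext k; fin_cases k <;>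
            simp [Fin.sum_univ_four, tetVerts, Matrix.vecHead, Matrix.vecTail] <;> push_cast <;> ring
      · refine mem 2 ![1 - (x 1 - q) - (x 2 - r), x 1 - q, 1 - (x 0 - p),
          (x 0 - p) + (x 2 - r) - 1] ?_ ?_ ?_
        · intro a; fin_cases a <;> simp <;> linarith
        · simp [Fin.sum_univ_four]; ring
        · funext k; fin_cases k <;>
            simp [Fin.sum_univ_four, tetVerts, Matrix.vecHead, Matrix.vecTail] <;> push_cast <;> ring
      · refine mem 4 ![1 - (x 2 - r), (x 0 - p) + (x 2 - r) - 1, (x 1 - q) + (x 2 - r) - 1,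
          2 - ((x 0 - p)+(x 1 - q)+(x 2 - r))] ?_ ?_ ?_
        · intro a; fin_cases a <;> simp <;> linarith
        · simp [Fin.sum_univ_four]; ring
        · funext k; fin_cases k <;>
            simp [Fin.sum_univ_four, tetVerts, Matrix.vecHead, Matrix.vecTail] <;> push_cast <;> ring
end

section
/- The family of tetrahedra {Tⁱ_P : i ∈ {1,…,6}, P ∈ ℤ³} covers ℝ³ (every point of ℝ³ lies in some Tⁱ_P), and any two distinct members of this family have disjoint interiors. -/
def C0 : Fin 6 → Fin 4 → ℤ
  | 0 => ![1,0,0,0]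
  | 1 => ![-1,1,1,0]
  | 2 => ![1,0,1,-1]
  | 3 => ![1,0,1,-1]
  | 4 => ![1,-1,-1,2]
  | 5 => ![1,1,1,-2]
def CE : Fin 6 → Fin 4 → ℤ
  | 0 => ![-1,1,0,0]
  | 1 => ![1,0,-1,0]
  | 2 => ![0,0,-1,1]
  | 3 => ![-1,1,0,0]
  | 4 => ![0,1,0,-1]
  | 5 => ![0,0,-1,1]
def CF : Fin 6 → Fin 4 → ℤ
  | 0 => ![-1,0,1,0]
  | 1 => ![1,-1,0,0]
  | 2 => ![-1,1,0,0]
  | 3 => ![0,0,-1,1]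
  | 4 => ![0,0,1,-1]
  | 5 => ![0,-1,0,1]
def CG : Fin 6 → Fin 4 → ℤ
  | 0 => ![-1,0,0,1]
  | 1 => ![1,-1,-1,1]
  | 2 => ![-1,0,0,1]
  | 3 => ![-1,0,0,1]
  | 4 => ![-1,1,1,-1]
  | 5 => ![-1,0,0,1]

noncomputable def w (i : Fin 6) (p q r : ℤ) (x : Fin 3 → ℝ) (a : Fin 4) : ℝ :=
  ((C0 i a : ℝ) - ((CE i a : ℝ) * p + (CF i a : ℝ) * q + (CG i a : ℝ) * r)) +
    ((CE i a : ℝ) * x 0 + (CF i a : ℝ) * x 1 + (CG i a : ℝ) * x 2)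

lemma coeff_nonzero (i : Fin 6) (a : Fin 4) :
    (CE i a : ℝ) ≠ 0 ∨ (CF i a : ℝ) ≠ 0 ∨ (CG i a : ℝ) ≠ 0 := by
  have h : CE i a ≠ 0 ∨ CF i a ≠ 0 ∨ CG i a ≠ 0 := by revert i a; decide
  rcases h with h | h | h
  · exact Or.inl (by exact_mod_cast h)
  · exact Or.inr (Or.inl (by exact_mod_cast h))
  · exact Or.inr (Or.inr (by exact_mod_cast h))

-- sum of weights is 1
lemma w_sum (i : Fin 6) (p q r : ℤ) (x : Fin 3 → ℝ) :
    ∑ a : Fin 4, w i p q r x a = 1 := by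
  fin_cases i <;>
    simp [w, C0, CE, CF, CG, Fin.sum_univ_four] <;> ring

-- reconstruction
lemma w_recon (i : Fin 6) (p q r : ℤ) (x : Fin 3 → ℝ) (k : Fin 3) :
    ∑ a : Fin 4, w i p q r x a * ((tetVerts i p q r a k : ℤ) : ℝ) = x k := by
  fin_cases i <;> fin_cases k <;>
    (simp [w, C0, CE, CF, CG, tetVerts, Fin.sum_univ_four, Matrix.vecHead, Matrix.vecTail]; push_cast; ring)
lemma halfspace_convex (d e f g : ℝ) :
    Convex ℝ {x : Fin 3 → ℝ | 0 ≤ d + (e * x 0 + f * x 1 + g * x 2)} := by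
  have hlin : IsLinearMap ℝ (fun x : Fin 3 → ℝ => e * x 0 + f * x 1 + g * x 2) := by
    constructor
    · intro x y; simp [Pi.add_apply]; ring
    · intro c x; simp [Pi.smul_apply, smul_eq_mul]; ring
  have : {x : Fin 3 → ℝ | 0 ≤ d + (e * x 0 + f * x 1 + g * x 2)} =
      {x : Fin 3 → ℝ | -d ≤ e * x 0 + f * x 1 + g * x 2} := by
    ext x; constructor <;> (intro h; simp at h ⊢; linarith)
  rw [this]; exact convex_halfSpace_ge hlin (-d)

lemma halfspace_interior (d e f g : ℝ) (h : e ≠ 0 ∨ f ≠ 0 ∨ g ≠ 0) :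
    interior {x : Fin 3 → ℝ | 0 ≤ d + (e * x 0 + f * x 1 + g * x 2)} =
      {x : Fin 3 → ℝ | 0 < d + (e * x 0 + f * x 1 + g * x 2)} := by
  set L : (Fin 3 → ℝ) →L[ℝ] ℝ :=
    e • ContinuousLinearMap.proj 0 + f • ContinuousLinearMap.proj 1 +
      g • ContinuousLinearMap.proj 2 with hL
  have hLapp : ∀ x : Fin 3 → ℝ, L x = e * x 0 + f * x 1 + g * x 2 := by
    intro x; simp [hL, smul_eq_mul]
  have hsurj : Function.Surjective L := by
    intro t
    rcases h with he | hf | hg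
    · exact ⟨Pi.single 0 (t / e), by simp [hLapp, Pi.single_apply]; field_simp⟩
    · exact ⟨Pi.single 1 (t / f), by simp [hLapp, Pi.single_apply]; field_simp⟩
    · exact ⟨Pi.single 2 (t / g), by simp [hLapp, Pi.single_apply]; field_simp⟩
  have hset : {x : Fin 3 → ℝ | 0 ≤ d + (e * x 0 + f * x 1 + g * x 2)} =
      L ⁻¹' Set.Ici (-d) := by
    ext x; simp [hLapp]; constructor <;> intro <;> linarith
  rw [hset, ← (L.isOpenMap hsurj).preimage_interior_eq_interior_preimage L.continuous,
    interior_Ici]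
  ext x; simp [hLapp]; constructor <;> intro <;> linarith

lemma w_halfspace_convex (i : Fin 6) (p q r : ℤ) (a : Fin 4) :
    Convex ℝ {x : Fin 3 → ℝ | 0 ≤ w i p q r x a} :=
  halfspace_convex _ _ _ _

lemma w_halfspace_interior (i : Fin 6) (p q r : ℤ) (a : Fin 4) :
    interior {x : Fin 3 → ℝ | 0 ≤ w i p q r x a} = {x : Fin 3 → ℝ | 0 < w i p q r x a} :=
  halfspace_interior _ _ _ _ (coeff_nonzero i a)

set_option maxHeartbeats 2000000 in
lemma w_vertex (i : Fin 6) (p q r : ℤ) (a b : Fin 4) :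
    0 ≤ w i p q r (fun k => ((tetVerts i p q r b k : ℤ) : ℝ)) a := by
  fin_cases i <;> fin_cases a <;> fin_cases b <;>
    norm_num [w, C0, CE, CF, CG, tetVerts, Matrix.cons_val_two, Matrix.tail_cons, Matrix.head_cons] <;> linarith

lemma tet_subset (i : Fin 6) (p q r : ℤ) (a : Fin 4) :
    tet i p q r ⊆ {x : Fin 3 → ℝ | 0 ≤ w i p q r x a} := by
  apply convexHull_min _ (w_halfspace_convex i p q r a)
  rintro y ⟨b, rfl⟩
  exact w_vertex i p q r a b

lemma w_nonneg_of_mem {i : Fin 6} {p q r : ℤ} {x : Fin 3 → ℝ} (hx : x ∈ tet i p q r)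
    (a : Fin 4) : 0 ≤ w i p q r x a := tet_subset i p q r a hx

lemma w_pos_of_mem_interior {i : Fin 6} {p q r : ℤ} {x : Fin 3 → ℝ}
    (hx : x ∈ interior (tet i p q r)) (a : Fin 4) : 0 < w i p q r x a := by
  have h := interior_mono (tet_subset i p q r a) hx
  rwa [w_halfspace_interior] at h

lemma mem_tet_of_nonneg {i : Fin 6} {p q r : ℤ} {x : Fin 3 → ℝ}
    (h : ∀ a, 0 ≤ w i p q r x a) : x ∈ tet i p q r := by
  have hsum : ∑ a : Fin 4, w i p q r x a = 1 := w_sum i p q r x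
  have hmem := Finset.centerMass_mem_convexHull (Finset.univ : Finset (Fin 4))
    (fun a _ => h a) (by rw [hsum]; norm_num)
    (fun a _ => Set.mem_range_self (f := fun a : Fin 4 => fun k : Fin 3 =>
      ((tetVerts i p q r a k : ℤ) : ℝ)) a)
  have hcm : (Finset.univ : Finset (Fin 4)).centerMass (w i p q r x)
      (fun a : Fin 4 => fun k : Fin 3 => ((tetVerts i p q r a k : ℤ) : ℝ)) = x := by
    rw [Finset.centerMass, hsum, inv_one, one_smul]
    funext k
    simpa [Finset.sum_apply] using w_recon i p q r x k
  rw [hcm] at hmem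
  exact hmem

lemma cube_of_pos {i : Fin 6} {p q r : ℤ} {x : Fin 3 → ℝ}
    (h : ∀ a, 0 < w i p q r x a) :
    (p : ℝ) < x 0 ∧ x 0 < p + 1 ∧ (q : ℝ) < x 1 ∧ x 1 < q + 1 ∧
      (r : ℝ) < x 2 ∧ x 2 < r + 1 := by
  have h0 := h 0; have h1 := h 1; have h2 := h 2; have h3 := h 3
  fin_cases i <;> norm_num [w, C0, CE, CF, CG, Matrix.cons_val_two, Matrix.cons_val_three, Matrix.tail_cons, Matrix.head_cons] at h0 h1 h2 h3 <;>
    exact ⟨by linarith, by linarith, by linarith, by linarith, by linarith, by linarith⟩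

set_option maxHeartbeats 4000000 in
/-- The family `{Tⁱ_P : i ∈ {1,…,6}, P ∈ ℤ³}` covers `ℝ³`, and any two distinct members
of the family have disjoint interiors. -/
theorem tets_cover_and_disjoint_interiors :
    (∀ x : Fin 3 → ℝ, ∃ (i : Fin 6) (p q r : ℤ), x ∈ tet i p q r) ∧
    (∀ (i : Fin 6) (p q r : ℤ) (i' : Fin 6) (p' q' r' : ℤ),
      (i, p, q, r) ≠ (i', p', q', r') →
      Disjoint (interior (tet i p q r)) (interior (tet i' p' q' r'))) := by
  constructor
  · intro x
    set p := ⌊x 0⌋ with hp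
    set q := ⌊x 1⌋ with hq
    set r := ⌊x 2⌋ with hr
    have hp1 : (p : ℝ) ≤ x 0 := Int.floor_le _
    have hp2 : x 0 < p + 1 := Int.lt_floor_add_one _
    have hq1 : (q : ℝ) ≤ x 1 := Int.floor_le _
    have hq2 : x 1 < q + 1 := Int.lt_floor_add_one _
    have hr1 : (r : ℝ) ≤ x 2 := Int.floor_le _
    have hr2 : x 2 < r + 1 := Int.lt_floor_add_one _
    rcases le_total (x 0 - p + (x 2 - r)) 1 with hu | hu <;>
      rcases le_total (x 1 - q + (x 2 - r)) 1 with hv | hv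
    · rcases le_total (x 0 - p + (x 1 - q) + (x 2 - r)) 1 with hs | hs
      · exact ⟨0, p, q, r, mem_tet_of_nonneg (by
          intro a; fin_cases a <;> norm_num [w, C0, CE, CF, CG, Matrix.cons_val_two, Matrix.cons_val_three, Matrix.tail_cons, Matrix.head_cons] <;> linarith)⟩
      · exact ⟨1, p, q, r, mem_tet_of_nonneg (by
          intro a; fin_cases a <;> norm_num [w, C0, CE, CF, CG, Matrix.cons_val_two, Matrix.cons_val_three, Matrix.tail_cons, Matrix.head_cons] <;> linarith)⟩
    · exact ⟨3, p, q, r, mem_tet_of_nonneg (by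
        intro a; fin_cases a <;> norm_num [w, C0, CE, CF, CG, Matrix.cons_val_two, Matrix.cons_val_three, Matrix.tail_cons, Matrix.head_cons] <;> linarith)⟩
    · exact ⟨2, p, q, r, mem_tet_of_nonneg (by
        intro a; fin_cases a <;> norm_num [w, C0, CE, CF, CG, Matrix.cons_val_two, Matrix.cons_val_three, Matrix.tail_cons, Matrix.head_cons] <;> linarith)⟩
    · rcases le_total (x 0 - p + (x 1 - q) + (x 2 - r)) 2 with hs | hs
      · exact ⟨4, p, q, r, mem_tet_of_nonneg (by
          intro a; fin_cases a <;> norm_num [w, C0, CE, CF, CG, Matrix.cons_val_two, Matrix.cons_val_three, Matrix.tail_cons, Matrix.head_cons] <;> linarith)⟩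
      · exact ⟨5, p, q, r, mem_tet_of_nonneg (by
          intro a; fin_cases a <;> norm_num [w, C0, CE, CF, CG, Matrix.cons_val_two, Matrix.cons_val_three, Matrix.tail_cons, Matrix.head_cons] <;> linarith)⟩
  · intro i p q r i' p' q' r' hne
    rw [Set.disjoint_left]
    intro x hx hx'
    have h := fun a => w_pos_of_mem_interior hx a
    have h' := fun a => w_pos_of_mem_interior hx' a
    obtain ⟨c1, c2, c3, c4, c5, c6⟩ := cube_of_pos h
    obtain ⟨d1, d2, d3, d4, d5, d6⟩ := cube_of_pos h'
    have hpp : p = p' := by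
      have a1 : (p : ℝ) < (p' : ℝ) + 1 := lt_trans c1 d2
      have a2 : (p' : ℝ) < (p : ℝ) + 1 := lt_trans d1 c2
      have b1 : p < p' + 1 := by exact_mod_cast a1
      have b2 : p' < p + 1 := by exact_mod_cast a2
      omega
    have hqq : q = q' := by
      have a1 : (q : ℝ) < (q' : ℝ) + 1 := lt_trans c3 d4
      have a2 : (q' : ℝ) < (q : ℝ) + 1 := lt_trans d3 c4
      have b1 : q < q' + 1 := by exact_mod_cast a1
      have b2 : q' < q + 1 := by exact_mod_cast a2
      omega
    have hrr : r = r' := by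
      have a1 : (r : ℝ) < (r' : ℝ) + 1 := lt_trans c5 d6
      have a2 : (r' : ℝ) < (r : ℝ) + 1 := lt_trans d5 c6
      have b1 : r < r' + 1 := by exact_mod_cast a1
      have b2 : r' < r + 1 := by exact_mod_cast a2
      omega
    subst hpp; subst hqq; subst hrr
    have h0 := h 0; have h1 := h 1; have h2 := h 2; have h3 := h 3
    have k0 := h' 0; have k1 := h' 1; have k2 := h' 2; have k3 := h' 3
    clear hx hx' h h' c1 c2 c3 c4 c5 c6 d1 d2 d3 d4 d5 d6
    fin_cases i <;> fin_cases i' <;>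
      norm_num [w, C0, CE, CF, CG, Matrix.cons_val_two, Matrix.cons_val_three, Matrix.tail_cons, Matrix.head_cons] at h0 h1 h2 h3 k0 k1 k2 k3 <;>
      first
        | exact hne rfl
        | linarith
end

section
/- For every P = (p,q,r) ∈ ℤ³ and every lattice point a ∈ ℤ³, one has β_P(a) ≥ α(a), with equality if and only if a ∈ {(p,q,r), (p+1,q,r), (p,q+1,r), (p,q,r+1)} (i.e., a is a vertex of the tetrahedron T¹_P); in particular β_P(a) > α(a) for every lattice point a outside this four-element set. -/
/-- The lifting function `α(x,y,z) = −2x² − 2y² − 2z² − xy − 2xz − 2yz`. -/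
noncomputable def liftα (x y z : ℝ) : ℝ :=
  -2 * x ^ 2 - 2 * y ^ 2 - 2 * z ^ 2 - x * y - 2 * x * z - 2 * y * z

/-- The affine function `β_P` whose graph is the affine hull of the lift of `T¹_P`. -/
noncomputable def liftβ (p q r x y z : ℝ) : ℝ :=
  2 * p + 2 * q + 2 * r - liftα p q r - (4 * p + q + 2 * r + 2) * x -
    (p + 4 * q + 2 * r + 2) * y - (2 * p + 2 * q + 4 * r + 2) * z

lemma key_int (u v w : ℤ) :
    0 ≤ (u + v + w - 1) ^ 2 + (u ^ 2 - u * v + v ^ 2 + w ^ 2) - 1 ∧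
    ((u + v + w - 1) ^ 2 + (u ^ 2 - u * v + v ^ 2 + w ^ 2) - 1 = 0 ↔
      (u = 0 ∧ v = 0 ∧ w = 0) ∨ (u = 1 ∧ v = 0 ∧ w = 0) ∨
      (u = 0 ∧ v = 1 ∧ w = 0) ∨ (u = 0 ∧ v = 0 ∧ w = 1)) := by
  have hE : 0 ≤ u ^ 2 - u * v + v ^ 2 + w ^ 2 := by nlinarith [sq_nonneg (u - v), sq_nonneg u, sq_nonneg v, sq_nonneg w]
  have hS := sq_nonneg (u + v + w - 1)
  constructor
  · by_cases h : u = 0 ∧ v = 0 ∧ w = 0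
    · obtain ⟨hu, hv, hw⟩ := h; subst hu; subst hv; subst hw; norm_num
    · have hE1 : 1 ≤ u ^ 2 - u * v + v ^ 2 + w ^ 2 := by
        rcases lt_or_eq_of_le hE with h1 | h1
        · omega
        · exfalso; apply h
          have h2 : (u - v) ^ 2 + u ^ 2 + v ^ 2 + 2 * w ^ 2 = 0 := by nlinarith
          have := sq_nonneg (u - v)
          constructor
          · nlinarith [sq_nonneg u]
          constructor
          · nlinarith [sq_nonneg v]
          · nlinarith [sq_nonneg w]
      linarith
  · constructor
    · intro h
      have hw2 : w ^ 2 ≤ 1 := by nlinarith [sq_nonneg (u - v), sq_nonneg u, sq_nonneg v]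
      have hu2 : u ^ 2 ≤ 2 := by nlinarith [sq_nonneg (u - v), sq_nonneg v, sq_nonneg w]
      have hv2 : v ^ 2 ≤ 2 := by nlinarith [sq_nonneg (u - v), sq_nonneg u, sq_nonneg w]
      have hwb : -1 ≤ w ∧ w ≤ 1 := by constructor <;> nlinarith
      have hub : -1 ≤ u ∧ u ≤ 1 := by constructor <;> nlinarith
      have hvb : -1 ≤ v ∧ v ≤ 1 := by constructor <;> nlinarith
      obtain ⟨h1, h2⟩ := hub; obtain ⟨h3, h4⟩ := hvb; obtain ⟨h5, h6⟩ := hwb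
      interval_cases u <;> interval_cases v <;> interval_cases w <;> omega
    · rintro (⟨h1, h2, h3⟩ | ⟨h1, h2, h3⟩ | ⟨h1, h2, h3⟩ | ⟨h1, h2, h3⟩) <;>
        subst h1 <;> subst h2 <;> subst h3 <;> norm_num


/-- For every `P = (p,q,r) ∈ ℤ³` and every lattice point `a = (x,y,z) ∈ ℤ³`, one has
`β_P(a) ≥ α(a)`, with equality iff `a` is a vertex of `T¹_P`; in particular `β_P(a) > α(a)`
for every lattice point outside these four vertices. -/
theorem liftβ_ge_liftα (p q r x y z : ℤ) :
    liftα x y z ≤ liftβ p q r x y z ∧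
    (liftβ p q r x y z = liftα x y z ↔
      ((x, y, z) = (p, q, r) ∨ (x, y, z) = (p + 1, q, r) ∨
       (x, y, z) = (p, q + 1, r) ∨ (x, y, z) = (p, q, r + 1))) ∧
    (¬ ((x, y, z) = (p, q, r) ∨ (x, y, z) = (p + 1, q, r) ∨
        (x, y, z) = (p, q + 1, r) ∨ (x, y, z) = (p, q, r + 1)) →
      liftα x y z < liftβ p q r x y z) := by
  obtain ⟨hge, hiff⟩ := key_int (x - p) (y - q) (z - r)
  have hcast : liftβ p q r x y z - liftα x y z =
      (((((x:ℤ) - p) + (y - q) + (z - r) - 1) ^ 2 +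
        (((x:ℤ) - p) ^ 2 - ((x:ℤ) - p) * ((y:ℤ) - q) + ((y:ℤ) - q) ^ 2 + ((z:ℤ) - r) ^ 2) - 1 : ℤ) : ℝ) := by
    simp only [liftβ, liftα]
    push_cast
    ring
  have hge' : (0:ℝ) ≤ liftβ p q r x y z - liftα x y z := by
    rw [hcast]; exact_mod_cast hge
  have heq : liftβ p q r x y z = liftα x y z ↔
      ((x - p) + (y - q) + (z - r) - 1) ^ 2 +
        ((x - p) ^ 2 - (x - p) * (y - q) + (y - q) ^ 2 + (z - r) ^ 2) - 1 = 0 := by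
    constructor
    · intro h
      have : liftβ p q r x y z - liftα x y z = 0 := by linarith
      rw [hcast] at this
      exact_mod_cast this
    · intro h
      have : liftβ p q r x y z - liftα x y z = 0 := by rw [hcast]; exact_mod_cast h
      linarith
  have hvert : (((x:ℤ), (y:ℤ), (z:ℤ)) = (p, q, r) ∨ ((x:ℤ), y, z) = (p + 1, q, r) ∨
       ((x:ℤ), y, z) = (p, q + 1, r) ∨ ((x:ℤ), y, z) = (p, q, r + 1)) ↔
      ((x - p = 0 ∧ y - q = 0 ∧ z - r = 0) ∨ (x - p = 1 ∧ y - q = 0 ∧ z - r = 0) ∨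
       (x - p = 0 ∧ y - q = 1 ∧ z - r = 0) ∨ (x - p = 0 ∧ y - q = 0 ∧ z - r = 1)) := by
    simp only [Prod.mk.injEq]
    omega
  refine ⟨by linarith, ?_, ?_⟩
  · rw [heq, hvert]; exact hiff
  · intro hnot
    have : liftβ p q r x y z ≠ liftα x y z :=
      fun h => hnot (hvert.mpr (hiff.mp (heq.mp h)))
    rcases lt_or_eq_of_le hge' with h | h
    · linarith
    · exact absurd (by linarith : liftβ p q r x y z = liftα x y z) this
end

section
/- The set of integer points (x,y,z) ∈ ℤ³ satisfying 2x² + 2y² + 2z² + xy + 2xz + 2yz − 2x − 2y − 2z ≤ 0 is exactly {(0,0,0), (1,0,0), (0,1,0), (0,0,1)}, and the left-hand side vanishes at each of these four points. (These four points are the vertices of the tetrahedron T¹_{(0,0,0)}.) -/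
lemma ellipsoid_Q1_bounds (x y z : ℤ)
    (h : 2*x^2+2*y^2+2*z^2+x*y+2*x*z+2*y*z-2*x-2*y-2*z ≤ 0) :
    0 ≤ x ∧ x ≤ 1 ∧ 0 ≤ y ∧ y ≤ 1 ∧ 0 ≤ z ∧ z ≤ 1 := by
  refine ⟨?_,?_,?_,?_,?_,?_⟩
  · nlinarith [sq_nonneg (4*y+x+2*z-2), sq_nonneg (6*z+3*x-2), sq_nonneg x]
  · nlinarith [sq_nonneg (4*y+x+2*z-2), sq_nonneg (6*z+3*x-2), sq_nonneg (x-1)]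
  · nlinarith [sq_nonneg (4*x+y+2*z-2), sq_nonneg (6*z+3*y-2), sq_nonneg y]
  · nlinarith [sq_nonneg (4*x+y+2*z-2), sq_nonneg (6*z+3*y-2), sq_nonneg (y-1)]
  · nlinarith [sq_nonneg (4*x+y+2*z-2), sq_nonneg (15*y+6*z-6), sq_nonneg z]
  · nlinarith [sq_nonneg (4*x+y+2*z-2), sq_nonneg (15*y+6*z-6), sq_nonneg (z-1)]

/-- The integer points in the solid ellipsoid Q1 are exactly the four vertices of the
corresponding elementary tetrahedron, and the defining quadric vanishes at each of them. -/
theorem lattice_points_of_ellipsoid_Q1 :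
    {v : ℤ × ℤ × ℤ | 2 * v.1 ^ 2 + 2 * v.2.1 ^ 2 + 2 * v.2.2 ^ 2 + v.1 * v.2.1 + 2 * v.1 * v.2.2 + 2 * v.2.1 * v.2.2 - 2 * v.1 - 2 * v.2.1 - 2 * v.2.2 ≤ 0} =
      ({(0,0,0), (1,0,0), (0,1,0), (0,0,1)} : Set (ℤ × ℤ × ℤ)) ∧
    ∀ v ∈ ({(0,0,0), (1,0,0), (0,1,0), (0,0,1)} : Set (ℤ × ℤ × ℤ)),
      2 * v.1 ^ 2 + 2 * v.2.1 ^ 2 + 2 * v.2.2 ^ 2 + v.1 * v.2.1 + 2 * v.1 * v.2.2 + 2 * v.2.1 * v.2.2 - 2 * v.1 - 2 * v.2.1 - 2 * v.2.2 = 0 := by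
  constructor
  · ext ⟨x, y, z⟩
    simp only [Set.mem_setOf_eq, Set.mem_insert_iff, Set.mem_singleton_iff, Prod.mk.injEq]
    constructor
    · intro h
      obtain ⟨h1, h2, h3, h4, h5, h6⟩ := ellipsoid_Q1_bounds x y z (by linarith [h])
      interval_cases x <;> interval_cases y <;> interval_cases z <;> omega
    · rintro (⟨rfl, rfl, rfl⟩ | ⟨rfl, rfl, rfl⟩ | ⟨rfl, rfl, rfl⟩ | ⟨rfl, rfl, rfl⟩) <;> norm_num
  · rintro v (rfl | rfl | rfl | rfl) <;> norm_num
end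

section
/- The set of integer points (x,y,z) ∈ ℤ³ satisfying 2x² + 2y² + 2z² + xy + 2xz + 2yz − 3x − 3y − 3z + 1 ≤ 0 is exactly {(1,1,0), (1,0,0), (0,1,0), (0,0,1)}, and the left-hand side vanishes at each of these four points. (These four points are the vertices of the tetrahedron T²_{(0,0,0)}.) -/
/-- The integer points in the solid ellipsoid Q2 are exactly the four vertices of the
corresponding elementary tetrahedron, and the defining quadric vanishes at each of them. -/
theorem lattice_points_of_ellipsoid_Q2 :
    {v : ℤ × ℤ × ℤ | 2 * v.1 ^ 2 + 2 * v.2.1 ^ 2 + 2 * v.2.2 ^ 2 + v.1 * v.2.1 + 2 * v.1 * v.2.2 + 2 * v.2.1 * v.2.2 - 3 * v.1 - 3 * v.2.1 - 3 * v.2.2 + 1 ≤ 0} =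
      ({(1,1,0), (1,0,0), (0,1,0), (0,0,1)} : Set (ℤ × ℤ × ℤ)) ∧
    ∀ v ∈ ({(1,1,0), (1,0,0), (0,1,0), (0,0,1)} : Set (ℤ × ℤ × ℤ)),
      2 * v.1 ^ 2 + 2 * v.2.1 ^ 2 + 2 * v.2.2 ^ 2 + v.1 * v.2.1 + 2 * v.1 * v.2.2 + 2 * v.2.1 * v.2.2 - 3 * v.1 - 3 * v.2.1 - 3 * v.2.2 + 1 = 0 := by
  constructor
  · ext ⟨x, y, z⟩
    simp only [Set.mem_setOf_eq, Set.mem_insert_iff, Set.mem_singleton_iff, Prod.mk.injEq]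
    constructor
    · intro h
      have h1 : 3 * x ^ 2 - 3 * x - 1 ≤ 0 := by
        nlinarith [sq_nonneg (2*y - 1), sq_nonneg (x + 2*z - 1), sq_nonneg (x + 2*y + 2*z - 2)]
      have h2 : 3 * y ^ 2 - 3 * y - 1 ≤ 0 := by
        nlinarith [sq_nonneg (2*x - 1), sq_nonneg (y + 2*z - 1), sq_nonneg (y + 2*x + 2*z - 2)]
      have h3 : 6 * z ^ 2 - 3 * z - 4 ≤ 0 := by
        nlinarith [sq_nonneg (x - y), sq_nonneg (5*x + 5*y + 4*z - 6)]
      have hx0 : 0 ≤ x := by nlinarith [sq_nonneg (x + 1)]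
      have hx1 : x ≤ 1 := by nlinarith [sq_nonneg (x - 2)]
      have hy0 : 0 ≤ y := by nlinarith [sq_nonneg (y + 1)]
      have hy1 : y ≤ 1 := by nlinarith [sq_nonneg (y - 2)]
      have hz0 : 0 ≤ z := by nlinarith [sq_nonneg (z + 1)]
      have hz1 : z ≤ 1 := by nlinarith [sq_nonneg (z - 2)]
      interval_cases x <;> interval_cases y <;> interval_cases z <;> revert h <;> norm_num
    · rintro (⟨rfl, rfl, rfl⟩ | ⟨rfl, rfl, rfl⟩ | ⟨rfl, rfl, rfl⟩ | ⟨rfl, rfl, rfl⟩) <;> norm_num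
  · rintro v (rfl | rfl | rfl | rfl) <;> norm_num
end

section
/- The set of integer points (x,y,z) ∈ ℤ³ satisfying 2x² + 2y² + 2z² + xy + 2xz + 2yz − 4x − 3y − 4z + 2 ≤ 0 is exactly {(1,0,0), (1,1,0), (0,0,1), (1,0,1)}, and the left-hand side vanishes at each of these four points. (These four points are the vertices of the tetrahedron T³_{(0,0,0)}.) -/
/-- The integer points in the solid ellipsoid Q3 are exactly the four vertices of the
corresponding elementary tetrahedron, and the defining quadric vanishes at each of them. -/
theorem lattice_points_of_ellipsoid_Q3 :
    {v : ℤ × ℤ × ℤ | 2 * v.1 ^ 2 + 2 * v.2.1 ^ 2 + 2 * v.2.2 ^ 2 + v.1 * v.2.1 + 2 * v.1 * v.2.2 + 2 * v.2.1 * v.2.2 - 4 * v.1 - 3 * v.2.1 - 4 * v.2.2 + 2 ≤ 0} =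
      ({(1,0,0), (1,1,0), (0,0,1), (1,0,1)} : Set (ℤ × ℤ × ℤ)) ∧
    ∀ v ∈ ({(1,0,0), (1,1,0), (0,0,1), (1,0,1)} : Set (ℤ × ℤ × ℤ)),
      2 * v.1 ^ 2 + 2 * v.2.1 ^ 2 + 2 * v.2.2 ^ 2 + v.1 * v.2.1 + 2 * v.1 * v.2.2 + 2 * v.2.1 * v.2.2 - 4 * v.1 - 3 * v.2.1 - 4 * v.2.2 + 2 = 0 := by
  constructor
  · ext ⟨x, y, z⟩
    simp only [Set.mem_setOf_eq, Set.mem_insert_iff, Set.mem_singleton_iff, Prod.mk.injEq]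
    constructor
    · intro h
      have hx0 : 0 ≤ x := by nlinarith [sq_nonneg (3*y - 1), sq_nonneg (6*z + 3*x - 5), sq_nonneg (3*y + 6*z + 3*x - 6)]
      have hx1 : x ≤ 1 := by nlinarith [sq_nonneg (3*y - 1), sq_nonneg (6*z + 3*x - 5), sq_nonneg (3*y + 6*z + 3*x - 6)]
      have hy0 : 0 ≤ y := by nlinarith [sq_nonneg (3*x - 2), sq_nonneg (6*z + 3*y - 4), sq_nonneg (3*x + 6*z + 3*y - 6)]
      have hy1 : y ≤ 1 := by nlinarith [sq_nonneg (3*x - 2), sq_nonneg (6*z + 3*y - 4), sq_nonneg (3*x + 6*z + 3*y - 6)]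
      have hz0 : 0 ≤ z := by nlinarith [sq_nonneg (15*x + 6*z - 13), sq_nonneg (15*y + 6*z - 8), sq_nonneg (5*x + 5*y + 4*z - 7)]
      have hz1 : z ≤ 1 := by nlinarith [sq_nonneg (15*x + 6*z - 13), sq_nonneg (15*y + 6*z - 8), sq_nonneg (5*x + 5*y + 4*z - 7)]
      interval_cases x <;> interval_cases y <;> interval_cases z <;> omega
    · rintro (⟨rfl, rfl, rfl⟩ | ⟨rfl, rfl, rfl⟩ | ⟨rfl, rfl, rfl⟩ | ⟨rfl, rfl, rfl⟩) <;> norm_num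
  · rintro v (rfl | rfl | rfl | rfl) <;> norm_num
end

section
/- The set of integer points (x,y,z) ∈ ℤ³ satisfying 2x² + 2y² + 2z² + xy + 2xz + 2yz − 3x − 4y − 4z + 2 ≤ 0 is exactly {(0,1,0), (1,1,0), (0,0,1), (0,1,1)}, and the left-hand side vanishes at each of these four points. (These four points are the vertices of the tetrahedron T⁴_{(0,0,0)}.) -/
lemma q4_mem (x y z : ℤ)
    (h : 2 * x ^ 2 + 2 * y ^ 2 + 2 * z ^ 2 + x * y + 2 * x * z + 2 * y * z - 3 * x - 4 * y - 4 * z + 2 ≤ 0) :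
    ((x,y,z) : ℤ × ℤ × ℤ) ∈ ({(0,1,0), (1,1,0), (0,0,1), (0,1,1)} : Set (ℤ × ℤ × ℤ)) := by
  have hx0 : 0 ≤ x := by nlinarith [sq_nonneg (x+y+z-1), sq_nonneg (y-1), sq_nonneg z, sq_nonneg (x+y-1), sq_nonneg (x+z), sq_nonneg (y+z-1)]
  have hx1 : x ≤ 1 := by nlinarith [sq_nonneg (x+y+z-2), sq_nonneg (y-1), sq_nonneg (z-1), sq_nonneg (x+y-2), sq_nonneg (x+z-1), sq_nonneg (y+z-1)]
  have hy0 : 0 ≤ y := by nlinarith [sq_nonneg (x+y+z-1), sq_nonneg x, sq_nonneg z, sq_nonneg (x+y), sq_nonneg (x+z-1), sq_nonneg (y+z)]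
  have hy1 : y ≤ 1 := by nlinarith [sq_nonneg (x+y+z-2), sq_nonneg x, sq_nonneg (z-1), sq_nonneg (x+y-1), sq_nonneg (x+z-1), sq_nonneg (y+z-2)]
  have hz0 : 0 ≤ z := by nlinarith [sq_nonneg (x+y+z-1), sq_nonneg x, sq_nonneg (y-1), sq_nonneg (x+z), sq_nonneg (y+z), sq_nonneg (x+y-1)]
  have hz1 : z ≤ 1 := by nlinarith [sq_nonneg (x+y+z-2), sq_nonneg x, sq_nonneg (y-1), sq_nonneg (x+z-1), sq_nonneg (y+z-2), sq_nonneg (x+y-1)]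
  interval_cases x <;> interval_cases y <;> interval_cases z <;>
    first
      | exact Or.inl rfl
      | exact Or.inr (Or.inl rfl)
      | exact Or.inr (Or.inr (Or.inl rfl))
      | exact Or.inr (Or.inr (Or.inr rfl))
      | (exfalso; revert h; decide)

/-- The integer points in the solid ellipsoid Q4 are exactly the four vertices of the
corresponding elementary tetrahedron, and the defining quadric vanishes at each of them. -/
theorem lattice_points_of_ellipsoid_Q4 :
    {v : ℤ × ℤ × ℤ | 2 * v.1 ^ 2 + 2 * v.2.1 ^ 2 + 2 * v.2.2 ^ 2 + v.1 * v.2.1 + 2 * v.1 * v.2.2 + 2 * v.2.1 * v.2.2 - 3 * v.1 - 4 * v.2.1 - 4 * v.2.2 + 2 ≤ 0} =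
      ({(0,1,0), (1,1,0), (0,0,1), (0,1,1)} : Set (ℤ × ℤ × ℤ)) ∧
    ∀ v ∈ ({(0,1,0), (1,1,0), (0,0,1), (0,1,1)} : Set (ℤ × ℤ × ℤ)),
      2 * v.1 ^ 2 + 2 * v.2.1 ^ 2 + 2 * v.2.2 ^ 2 + v.1 * v.2.1 + 2 * v.1 * v.2.2 + 2 * v.2.1 * v.2.2 - 3 * v.1 - 4 * v.2.1 - 4 * v.2.2 + 2 = 0 := by
  constructor
  · ext ⟨x, y, z⟩
    constructor
    · intro h
      exact q4_mem x y z h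
    · intro h
      simp only [Set.mem_insert_iff, Set.mem_singleton_iff, Prod.mk.injEq] at h
      rcases h with ⟨h1,h2,h3⟩|⟨h1,h2,h3⟩|⟨h1,h2,h3⟩|⟨h1,h2,h3⟩ <;> subst h1 <;> subst h2 <;> subst h3 <;> norm_num [Set.mem_setOf_eq]
  · intro v hv
    simp only [Set.mem_insert_iff, Set.mem_singleton_iff] at hv
    rcases hv with h|h|h|h <;> subst h <;> norm_num
end

section
/- The set of integer points (x,y,z) ∈ ℤ³ satisfying 2x² + 2y² + 2z² + xy + 2xz + 2yz − 4x − 4y − 5z + 3 ≤ 0 is exactly {(1,1,0), (1,0,1), (0,1,1), (0,0,1)}, and the left-hand side vanishes at each of these four points. (These four points are the vertices of the tetrahedron T⁵_{(0,0,0)}.) -/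
/-- The integer points in the solid ellipsoid Q5 are exactly the four vertices of the
corresponding elementary tetrahedron, and the defining quadric vanishes at each of them. -/
theorem lattice_points_of_ellipsoid_Q5 :
    {v : ℤ × ℤ × ℤ | 2 * v.1 ^ 2 + 2 * v.2.1 ^ 2 + 2 * v.2.2 ^ 2 + v.1 * v.2.1 + 2 * v.1 * v.2.2 + 2 * v.2.1 * v.2.2 - 4 * v.1 - 4 * v.2.1 - 5 * v.2.2 + 3 ≤ 0} =
      ({(1,1,0), (1,0,1), (0,1,1), (0,0,1)} : Set (ℤ × ℤ × ℤ)) ∧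
    ∀ v ∈ ({(1,1,0), (1,0,1), (0,1,1), (0,0,1)} : Set (ℤ × ℤ × ℤ)),
      2 * v.1 ^ 2 + 2 * v.2.1 ^ 2 + 2 * v.2.2 ^ 2 + v.1 * v.2.1 + 2 * v.1 * v.2.2 + 2 * v.2.1 * v.2.2 - 4 * v.1 - 4 * v.2.1 - 5 * v.2.2 + 3 = 0 := by
  constructor
  · ext ⟨x, y, z⟩
    simp only [Set.mem_setOf_eq, Set.mem_insert_iff, Set.mem_singleton_iff, Prod.mk.injEq]
    constructor
    · intro h
      have hx0 : 0 ≤ x := by nlinarith [sq_nonneg (2*y - 1), sq_nonneg (2*x + 2*y + 4*z - 5)]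
      have hx1 : x ≤ 1 := by nlinarith [sq_nonneg (2*y - 1), sq_nonneg (2*x + 2*y + 4*z - 5)]
      have hy0 : 0 ≤ y := by nlinarith [sq_nonneg (2*x - 1), sq_nonneg (2*x + 2*y + 4*z - 5)]
      have hy1 : y ≤ 1 := by nlinarith [sq_nonneg (2*x - 1), sq_nonneg (2*x + 2*y + 4*z - 5)]
      have hz0 : 0 ≤ z := by nlinarith [sq_nonneg (5*x + 5*y + 4*z - 8), sq_nonneg (x - y)]
      have hz1 : z ≤ 1 := by nlinarith [sq_nonneg (5*x + 5*y + 4*z - 8), sq_nonneg (x - y)]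
      interval_cases x <;> interval_cases y <;> interval_cases z <;> omega
    · rintro (⟨rfl, rfl, rfl⟩ | ⟨rfl, rfl, rfl⟩ | ⟨rfl, rfl, rfl⟩ | ⟨rfl, rfl, rfl⟩) <;> norm_num
  · rintro v (rfl | rfl | rfl | rfl) <;> norm_num
end

section
/- The set of integer points (x,y,z) ∈ ℤ³ satisfying 2x² + 2y² + 2z² + xy + 2xz + 2yz − 5x − 5y − 6z + 5 ≤ 0 is exactly {(1,1,0), (1,0,1), (0,1,1), (1,1,1)}, and the left-hand side vanishes at each of these four points. (These four points are the vertices of the tetrahedron T⁶_{(0,0,0)}.) -/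
/-- The integer points in the solid ellipsoid Q6 are exactly the four vertices of the
corresponding elementary tetrahedron, and the defining quadric vanishes at each of them. -/
theorem lattice_points_of_ellipsoid_Q6 :
    {v : ℤ × ℤ × ℤ | 2 * v.1 ^ 2 + 2 * v.2.1 ^ 2 + 2 * v.2.2 ^ 2 + v.1 * v.2.1 + 2 * v.1 * v.2.2 + 2 * v.2.1 * v.2.2 - 5 * v.1 - 5 * v.2.1 - 6 * v.2.2 + 5 ≤ 0} =
      ({(1,1,0), (1,0,1), (0,1,1), (1,1,1)} : Set (ℤ × ℤ × ℤ)) ∧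
    ∀ v ∈ ({(1,1,0), (1,0,1), (0,1,1), (1,1,1)} : Set (ℤ × ℤ × ℤ)),
      2 * v.1 ^ 2 + 2 * v.2.1 ^ 2 + 2 * v.2.2 ^ 2 + v.1 * v.2.1 + 2 * v.1 * v.2.2 + 2 * v.2.1 * v.2.2 - 5 * v.1 - 5 * v.2.1 - 6 * v.2.2 + 5 = 0 := by
  constructor
  · ext ⟨x, y, z⟩
    simp only [Set.mem_setOf_eq, Set.mem_insert_iff, Set.mem_singleton_iff, Prod.mk.injEq]
    constructor
    · intro h
      have key : ∀ a b c : ℤ, 2 * a ^ 2 + 2 * b ^ 2 + 2 * c ^ 2 + a * b + 2 * a * c + 2 * b * c - 5 * a - 5 * b - 6 * c + 5 ≤ 0 → 0 ≤ a ∧ a ≤ 1 := by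
        intro a b c h
        constructor
        · by_contra h'
          push_neg at h'
          have h1 : a ≤ -1 := by omega
          nlinarith [sq_nonneg (4*b + a + 2*c - 5), sq_nonneg (6*c + 3*a - 7), mul_nonneg (by linarith : (0:ℤ) ≤ -a) (by linarith : (0:ℤ) ≤ -a-1)]
        · by_contra h'
          push_neg at h'
          have h1 : 2 ≤ a := by omega
          nlinarith [sq_nonneg (4*b + a + 2*c - 5), sq_nonneg (6*c + 3*a - 7), mul_nonneg (by linarith : (0:ℤ) ≤ a-2) (by linarith : (0:ℤ) ≤ a-1)]
      have keyz : ∀ a b c : ℤ, 2 * a ^ 2 + 2 * b ^ 2 + 2 * c ^ 2 + a * b + 2 * a * c + 2 * b * c - 5 * a - 5 * b - 6 * c + 5 ≤ 0 → 0 ≤ c ∧ c ≤ 1 := by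
        intro a b c h
        constructor
        · by_contra h'
          push_neg at h'
          have h1 : c ≤ -1 := by omega
          nlinarith [sq_nonneg (4*a + b + 2*c - 5), sq_nonneg (5*b + 2*c - 5), mul_nonneg (by linarith : (0:ℤ) ≤ -c) (by linarith : (0:ℤ) ≤ -c-1)]
        · by_contra h'
          push_neg at h'
          have h1 : 2 ≤ c := by omega
          nlinarith [sq_nonneg (4*a + b + 2*c - 5), sq_nonneg (5*b + 2*c - 5), mul_nonneg (by linarith : (0:ℤ) ≤ c-2) (by linarith : (0:ℤ) ≤ c-1)]
      obtain ⟨hx0, hx1⟩ := key x y z h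
      obtain ⟨hy0, hy1⟩ := key y x z (by linarith)
      obtain ⟨hz0, hz1⟩ := keyz x y z h
      interval_cases x <;> interval_cases y <;> interval_cases z <;> omega
    · rintro (⟨rfl, rfl, rfl⟩ | ⟨rfl, rfl, rfl⟩ | ⟨rfl, rfl, rfl⟩ | ⟨rfl, rfl, rfl⟩) <;> norm_num
  · rintro v (rfl | rfl | rfl | rfl) <;> norm_num
end
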